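/- Let r be a real number with |r| < 1, and let (r_k)_{k≥0} be a real sequence with r_0 = 1, r_1 = r, |r_k| ≤ 1 for all k, satisfying the recurrence (1 + r_2) r_k = r (r_{k-1} + r_{k+1}) for all k ≥ 1, where additionally 2|r| < 1 + r_2. Then r_k = r^k for all k. -/

import Mathlib

theorem stmt_0 (r : ℝ) (s : ℕ → ℝ) (hr : |r| < 1)
    (h0 : s 0 = 1) (h1 : s 1 = r)
    (hbd : ∀ k, |s k| ≤ 1)
    (hrec : ∀ k : ℕ, 1 ≤ k → (1 + s 2) * s k = r * (s (k - 1) + s (k + 1)))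
    (hgap : 2 * |r| < 1 + s 2) :
    ∀ k, s k = r ^ k := by
  have h2 : 0 < 1 + s 2 := lt_of_le_of_lt (by positivity) hgap
  set q : ℝ := 2 * |r| / (1 + s 2) with hqdef
  have hq1 : q < 1 := (div_lt_one h2).2 hgap
  have hq0 : 0 ≤ q := by positivity
  -- decay: |s k| ≤ q^m for all k ≥ m
  have decay : ∀ m k, m ≤ k → |s k| ≤ q ^ m := by
    intro m
    induction m with
    | zero => simpa using hbd
    | succ m ih =>
      intro k hk
      have hk1 : 1 ≤ k := by omega
      have hrk := hrec k hk1
      have hA : |s (k - 1)| ≤ q ^ m := ih _ (by omega)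
      have hB : |s (k + 1)| ≤ q ^ m := ih _ (by omega)
      have key : (1 + s 2) * |s k| ≤ 2 * |r| * q ^ m := by
        calc (1 + s 2) * |s k| = |(1 + s 2) * s k| := by
              rw [abs_mul, abs_of_pos h2]
          _ = |r| * |s (k - 1) + s (k + 1)| := by rw [hrk, abs_mul]
          _ ≤ |r| * (|s (k - 1)| + |s (k + 1)|) := by
              gcongr; exact abs_add_le _ _
          _ ≤ |r| * (q ^ m + q ^ m) := by gcongr
          _ = 2 * |r| * q ^ m := by ring
      have : |s k| ≤ 2 * |r| * q ^ m / (1 + s 2) := by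
        rw [le_div_iff₀ h2]
        linarith [key]
      calc |s k| ≤ 2 * |r| * q ^ m / (1 + s 2) := this
        _ = q ^ (m + 1) := by rw [pow_succ, hqdef]; ring
  rcases eq_or_ne r 0 with hr0 | hr0
  · intro k
    match k with
    | 0 => simpa using h0
    | (k + 1) =>
      have := hrec (k + 1) (by omega)
      rw [hr0] at this ⊢
      have : s (k + 1) = 0 := by
        have hne := ne_of_gt h2
        field_simp at this
        rcases mul_eq_zero.mp (this.trans (zero_mul _)) with h | h
        · exact absurd h hne
        · exact h
      simp [this, zero_pow (Nat.succ_ne_zero k)]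
  · -- main case: r ≠ 0
    have hrpos : 0 < |r| := abs_pos.2 hr0
    set c : ℝ := (1 + s 2) / r with hcdef
    have hcabs : 2 < |c| := by
      rw [hcdef, abs_div, abs_of_pos h2, lt_div_iff₀ hrpos]
      linarith
    set a : ℝ := |c| / 2 with hadef
    have ha : 1 < a := by rw [hadef]; linarith
    have ha0 : (0:ℝ) ≤ a ^ 2 - 1 := by nlinarith
    set D : ℝ := Real.sqrt (a ^ 2 - 1) with hDdef
    have hD2 : D ^ 2 = a ^ 2 - 1 := Real.sq_sqrt ha0
    have hD0 : 0 ≤ D := Real.sqrt_nonneg _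
    have hDlt : D < a := by
      nlinarith [hD2, hD0]
    set lam0 : ℝ := a + D with hlam0
    set mu0 : ℝ := a - D with hmu0
    have hlam0gt : 1 < lam0 := by rw [hlam0]; linarith
    have hmu0pos : 0 < mu0 := by rw [hmu0]; linarith
    have hprod0 : lam0 * mu0 = 1 := by rw [hlam0, hmu0]; nlinarith [hD2]
    have hmu0lt : mu0 < 1 := by nlinarith
    set sg : ℝ := if 0 ≤ c then (1:ℝ) else -1 with hsg
    have hsg2 : sg * sg = 1 := by rw [hsg]; split <;> norm_num
    have hsgc : sg * |c| = c := by
      rw [hsg]; split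
      · simp [abs_of_nonneg ‹0 ≤ c›]
      · rw [abs_of_neg (by linarith [not_le.mp ‹¬ 0 ≤ c›])]; ring
    set lam : ℝ := sg * lam0 with hlamdef
    set mu : ℝ := sg * mu0 with hmudef
    have hsum : lam + mu = c := by
      rw [hlamdef, hmudef, hlam0, hmu0, ← hsgc, hadef]; ring
    have hprod : lam * mu = 1 := by
      rw [hlamdef, hmudef]
      calc sg * lam0 * (sg * mu0) = (sg * sg) * (lam0 * mu0) := by ring
        _ = 1 := by rw [hsg2, hprod0]; ring
    have hsgabs : |sg| = 1 := by rw [hsg]; split <;> norm_num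
    have habslam : |lam| = lam0 := by
      rw [hlamdef, abs_mul, hsgabs, abs_of_pos (by linarith : (0:ℝ) < lam0)]; ring
    have habsmu : |mu| = mu0 := by
      rw [hmudef, abs_mul, hsgabs, abs_of_pos hmu0pos]; ring
    -- recurrence in explicit form
    have srec : ∀ k : ℕ, 1 ≤ k → s (k + 1) = c * s k - s (k - 1) := by
      intro k hk
      have := hrec k hk
      rw [hcdef]
      field_simp
      linarith [this]
    set v : ℕ → ℝ := fun k => s (k + 1) - mu * s k with hvdef
    have vrec : ∀ k : ℕ, 1 ≤ k → v k = lam * v (k - 1) := by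
      intro k hk
      have hs := srec k hk
      have hk1 : k - 1 + 1 = k := by omega
      simp only [hvdef, hk1]
      rw [hs]
      linear_combination (- s k) * hsum + s (k - 1) * hprod
    have vpow : ∀ k : ℕ, v k = lam ^ k * v 0 := by
      intro k
      induction k with
      | zero => simp
      | succ k ih =>
        have := vrec (k + 1) (by omega)
        simp only [Nat.add_sub_cancel] at this
        rw [this, ih, pow_succ]; ring
    have vbound : ∀ k : ℕ, |v k| ≤ 1 + mu0 := by
      intro k
      have h1' : |s (k + 1)| ≤ 1 := hbd _
      have h2' : |s k| ≤ 1 := hbd _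
      calc |v k| ≤ |s (k + 1)| + |mu * s k| := abs_sub _ _
        _ = |s (k + 1)| + mu0 * |s k| := by rw [abs_mul, habsmu]
        _ ≤ 1 + mu0 * 1 := by gcongr
        _ = 1 + mu0 := by ring
    -- stronger bound using decay
    have vbound2 : ∀ k : ℕ, |v k| ≤ (1 + mu0) * q ^ k := by
      intro k
      have h1' : |s (k + 1)| ≤ q ^ k := by
        calc |s (k + 1)| ≤ q ^ (k + 1) := decay (k + 1) (k + 1) le_rfl
          _ ≤ q ^ k := pow_le_pow_of_le_one hq0 hq1.le (by omega)
      have h2' : |s k| ≤ q ^ k := decay k k le_rfl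
      calc |v k| ≤ |s (k + 1)| + |mu * s k| := abs_sub _ _
        _ = |s (k + 1)| + mu0 * |s k| := by rw [abs_mul, habsmu]
        _ ≤ q ^ k + mu0 * q ^ k := by gcongr
        _ = (1 + mu0) * q ^ k := by ring
    have hv0 : v 0 = 0 := by
      by_contra hne
      have hv0pos : 0 < |v 0| := abs_pos.2 hne
      obtain ⟨k, hk⟩ := pow_unbounded_of_one_lt ((1 + mu0) / |v 0|) hlam0gt
      have hk' : (1 + mu0) / |v 0| < |lam| ^ k := by rwa [habslam]
      have : |lam| ^ k * |v 0| ≤ 1 + mu0 := by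
        have := vbound k
        rw [vpow k, abs_mul, abs_pow] at this
        linarith
      rw [div_lt_iff₀ hv0pos] at hk'
      linarith
    have hmur : mu = r := by
      have : s 1 - mu * s 0 = 0 := hv0
      rw [h0, h1] at this
      linarith
    have vzero : ∀ k, v k = 0 := by
      intro k; rw [vpow k, hv0]; ring
    intro k
    induction k with
    | zero => simpa using h0
    | succ k ih =>
      have := vzero k
      have : s (k + 1) = mu * s k := by
        have h := vzero k
        simp only [hvdef] at h
        linarith
      rw [this, hmur, ih, pow_succ]; ring
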